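/- Let n ≥ 1, let S be a set, let K be an abelian group, and let β be an ordinal whose cofinality is at most ℵ_{n−1}. Then every n-coherent family ⟨φ_{α⃗} : S × α₀ → K⟩, indexed by the strictly increasing n-tuples of ordinals below β and coherent modulo finitely many rows, is trivial. -/

import Mathlib

open Cardinal Ordinal

set_option maxHeartbeats 1000000

namespace Goblot

universe u

variable {S : Type*} {K : Type*} [AddCommGroup K]

/-- negligible below `b`: nonzero on only finitely many rows `s` with some column `ξ < b`. -/
def Negl (b : Ordinal.{u}) (g : S → Ordinal.{u} → K) : Prop :=
  {s : S | ∃ ξ < b, g s ξ ≠ 0}.Finite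

theorem Negl.mono {b b' : Ordinal} {g : S → Ordinal → K} (h : Negl b g) (hb : b' ≤ b) :
    Negl b' g :=
  h.subset fun s ⟨ξ, hξ, hne⟩ => ⟨ξ, hξ.trans_le hb, hne⟩

theorem Negl.zero (b : Ordinal) : Negl b (fun (_ : S) (_ : Ordinal) => (0 : K)) := by
  simpa [Negl] using Set.finite_empty

theorem Negl.add {b : Ordinal} {f g : S → Ordinal → K} (hf : Negl b f) (hg : Negl b g) :
    Negl b (fun s ξ => f s ξ + g s ξ) := by
  refine (hf.union hg).subset fun s ⟨ξ, hξ, hne⟩ => ?_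
  by_cases h1 : ∃ ξ < b, f s ξ ≠ 0
  · exact Or.inl h1
  · push_neg at h1
    exact Or.inr ⟨ξ, hξ, fun h2 => hne (show f s ξ + g s ξ = 0 by rw [h1 ξ hξ, h2, add_zero])⟩

theorem Negl.neg {b : Ordinal} {f : S → Ordinal → K} (hf : Negl b f) :
    Negl b (fun s ξ => -(f s ξ)) :=
  hf.subset fun s ⟨ξ, hξ, hne⟩ => ⟨ξ, hξ, fun h => hne (show -(f s ξ) = 0 by rw [h, neg_zero])⟩

theorem Negl.sub {b : Ordinal} {f g : S → Ordinal → K} (hf : Negl b f) (hg : Negl b g) :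
    Negl b (fun s ξ => f s ξ - g s ξ) := by
  simpa [sub_eq_add_neg] using hf.add hg.neg

theorem Negl.zsmul {b : Ordinal} {f : S → Ordinal → K} (hf : Negl b f) (c : ℤ) :
    Negl b (fun s ξ => c • f s ξ) :=
  hf.subset fun s ⟨ξ, hξ, hne⟩ => ⟨ξ, hξ, fun h => hne (show c • f s ξ = 0 by rw [h, smul_zero])⟩

theorem Negl.congr {b : Ordinal} {f g : S → Ordinal → K} (hf : Negl b f)
    (h : ∀ s ξ, ξ < b → f s ξ = g s ξ) : Negl b g :=
  hf.subset fun s ⟨ξ, hξ, hne⟩ => ⟨ξ, hξ, fun hh => hne (by rw [← h s ξ hξ, hh])⟩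

theorem Negl.sum {b : Ordinal} {ι : Type*} (t : Finset ι) (f : ι → S → Ordinal → K)
    (h : ∀ i ∈ t, Negl b (f i)) : Negl b (fun s ξ => ∑ i ∈ t, f i s ξ) := by
  classical
  induction t using Finset.induction_on with
  | empty => simpa using Negl.zero b
  | insert a t' hx ih =>
    have := (h a (Finset.mem_insert_self a t')).add
      (ih fun i hi => h i (Finset.mem_insert_of_mem hi))
    exact this.congr fun s ξ _ => by rw [Finset.sum_insert hx]

/-- families indexed by `n`-tuples of ordinals -/
abbrev Fam (S K : Type*) (n : ℕ) := (Fin n → Ordinal.{u}) → S → Ordinal.{u} → K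

/-- alternating-sum differential, evaluated -/
def dAp {n : ℕ} (φ : Fam S K n) (B : Fin (n + 1) → Ordinal) (s : S) (ξ : Ordinal) : K :=
  ∑ i : Fin (n + 1), ((-1 : ℤ) ^ (i : ℕ)) • φ (Fin.removeNth i B) s ξ

def IsCoh {n : ℕ} (δ : Ordinal) (φ : Fam S K (n + 1)) : Prop :=
  ∀ B : Fin (n + 2) → Ordinal, StrictMono B → (∀ i, B i < δ) → Negl (B 0) (dAp φ B)

def IsTrivB {n : ℕ} (δ : Ordinal) (φ : Fam S K (n + 1)) (ψ : Fam S K n) : Prop :=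
  ∀ B : Fin (n + 1) → Ordinal, StrictMono B → (∀ i, B i < δ) →
    Negl (B 0) (fun s ξ => dAp ψ B s ξ - φ B s ξ)

theorem IsTrivB.mono {n : ℕ} {δ δ' : Ordinal} {φ : Fam S K (n + 1)} {ψ : Fam S K n}
    (h : IsTrivB δ φ ψ) (hd : δ' ≤ δ) : IsTrivB δ' φ ψ :=
  fun B hB hlt => h B hB fun i => (hlt i).trans_le hd

lemma val_succAbove {n : ℕ} (p : Fin (n + 1)) (x : Fin n) :
    ((p.succAbove x : Fin (n + 1)) : ℕ) = if (x : ℕ) < (p : ℕ) then (x : ℕ) else (x : ℕ) + 1 := by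
  rcases lt_or_ge (x.castSucc) p with h | h
  · rw [Fin.succAbove_of_castSucc_lt _ _ h]
    simp only [Fin.coe_castSucc]
    rw [if_pos]
    exact h
  · rw [Fin.succAbove_of_le_castSucc _ _ h]
    simp only [Fin.val_succ]
    rw [if_neg]
    simp only [not_lt]
    exact h

lemma succAbove_swap {n : ℕ} (i : Fin (n + 2)) (j : Fin (n + 1)) (h : (j : ℕ) < (i : ℕ))
    (hi : i ≠ 0) (x : Fin n) :
    i.succAbove (j.succAbove x) = (j.castSucc).succAbove ((i.pred hi).succAbove x) := by
  have hi' : 0 < (i : ℕ) := by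
    rcases Nat.eq_zero_or_pos (i : ℕ) with h0 | h0
    · exact absurd (Fin.ext (by simpa using h0) : i = 0) hi
    · exact h0
  apply Fin.ext
  rw [val_succAbove, val_succAbove, val_succAbove, val_succAbove]
  simp only [Fin.coe_castSucc, Fin.coe_pred]
  split_ifs <;> omega

lemma removeNth_removeNth {α : Type*} {n : ℕ} (B : Fin (n + 2) → α) (i : Fin (n + 2))
    (j : Fin (n + 1)) (h : (j : ℕ) < (i : ℕ)) (hi : i ≠ 0) :
    Fin.removeNth j (Fin.removeNth i B)
      = Fin.removeNth (i.pred hi) (Fin.removeNth j.castSucc B) := by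
  funext x
  show B (i.succAbove (j.succAbove x)) = B ((j.castSucc).succAbove ((i.pred hi).succAbove x))
  rw [succAbove_swap i j h hi x]

/-- the differential of a differential vanishes identically -/
theorem dd_zero {n : ℕ} (χ : Fam S K n) (B : Fin (n + 2) → Ordinal) (s : S) (ξ : Ordinal) :
    ∑ i : Fin (n + 2), ((-1 : ℤ) ^ (i : ℕ)) • dAp χ (Fin.removeNth i B) s ξ = 0 := by
  classical
  have expand : ∑ i : Fin (n + 2), ((-1 : ℤ) ^ (i : ℕ)) • dAp χ (Fin.removeNth i B) s ξ
      = ∑ p : Fin (n + 2) × Fin (n + 1),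
          ((-1 : ℤ) ^ ((p.1 : ℕ) + (p.2 : ℕ))) • χ (Fin.removeNth p.2 (Fin.removeNth p.1 B)) s ξ := by
    rw [← Finset.univ_product_univ, Finset.sum_product]
    refine Finset.sum_congr rfl fun i _ => ?_
    rw [dAp, Finset.smul_sum]
    refine Finset.sum_congr rfl fun j _ => ?_
    rw [smul_smul, pow_add]
  rw [expand]
  refine Finset.sum_involution
    (g := fun p _ => if h : (p.2 : ℕ) < (p.1 : ℕ)
      then (p.2.castSucc, p.1.pred (fun h0 => by simp [h0] at h))
      else (p.2.succ, p.1.castLT (by omega)))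
    ?_ ?_ (fun p _ => Finset.mem_univ _) ?_
  · -- sums to zero
    rintro ⟨i, j⟩ _
    dsimp only
    split_ifs with h
    · have hi : i ≠ 0 := fun h0 => by simp [h0] at h
      rw [removeNth_removeNth B i j h hi]
      set v := χ (Fin.removeNth (i.pred hi) (Fin.removeNth j.castSucc B)) s ξ
      rw [← add_smul]
      convert zero_smul ℤ v
      have hv : (i : ℕ) + (j : ℕ) = ((j.castSucc : ℕ) + ((i.pred hi) : ℕ)) + 1 := by
        simp only [Fin.coe_castSucc, Fin.coe_pred]
        omega
      rw [hv, pow_succ]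
      ring
    · push_neg at h
      have hj : (j.succ : ℕ) ≠ 0 := by simp
      have hne : ((Fin.castLT i (by omega : (i:ℕ) < n + 1) : Fin (n+1)) : ℕ) < ((j.succ : Fin (n+2)) : ℕ) := by
        simp only [Fin.coe_castLT, Fin.val_succ]
        omega
      have hi0 : (j.succ : Fin (n+2)) ≠ 0 := Fin.succ_ne_zero j
      rw [removeNth_removeNth B j.succ (Fin.castLT i (by omega)) hne hi0]
      have e1 : (Fin.castLT i (by omega : (i:ℕ) < n + 1)).castSucc = i := by
        apply Fin.ext; simp
      have e2 : (j.succ).pred hi0 = j := by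
        apply Fin.ext; simp
      rw [e1, e2]
      set v := χ (Fin.removeNth j (Fin.removeNth i B)) s ξ
      rw [← add_smul]
      convert zero_smul ℤ v
      have hv : ((j.succ : Fin (n+2)) : ℕ) + ((Fin.castLT i (by omega : (i:ℕ) < n + 1) : Fin (n+1)) : ℕ)
          = ((i : ℕ) + (j : ℕ)) + 1 := by
        simp only [Fin.val_succ, Fin.coe_castLT]
        omega
      rw [hv, pow_succ]
      ring
  · -- g a ≠ a when nonzero
    rintro ⟨i, j⟩ _ _
    dsimp only
    split_ifs with h
    · intro hq
      have := congrArg (fun p => (p.1 : ℕ)) hq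
      simp only [Fin.coe_castSucc] at this
      omega
    · intro hq
      have := congrArg (fun p => (p.1 : ℕ)) hq
      simp only [Fin.val_succ] at this
      omega
  · -- involution
    rintro ⟨i, j⟩ _
    dsimp only
    split_ifs with h h2 h3 h4
    · exfalso
      simp only [Fin.coe_pred, Fin.coe_castSucc] at h2
      omega
    · refine Prod.ext ?_ ?_ <;> apply Fin.ext <;> simp
    · refine Prod.ext ?_ ?_ <;> apply Fin.ext <;> simp
    · exfalso
      simp only [Fin.coe_castLT, Fin.val_succ, not_lt] at h3 h
      omega

lemma removeNth_last' {α : Sort*} {n : ℕ} (g : Fin (n + 1) → α) :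
    Fin.removeNth (Fin.last n) g = Fin.init g := by
  funext j
  show g ((Fin.last n).succAbove j) = g j.castSucc
  rw [Fin.succAbove_last]

lemma removeNth_castSucc_snoc {α : Type*} {n : ℕ} (B : Fin (n + 1) → α) (γ : α)
    (i : Fin (n + 1)) :
    Fin.removeNth i.castSucc (Fin.snoc B γ : Fin (n + 2) → α)
      = Fin.snoc (Fin.removeNth i B : Fin n → α) γ := by
  have hlast : i.castSucc.succAbove (Fin.last n) = Fin.last (n + 1) := by
    apply Fin.ext
    rw [val_succAbove]
    simp only [Fin.val_last, Fin.coe_castSucc]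
    rw [if_neg (by have := i.isLt; omega)]
  funext j
  induction j using Fin.lastCases with
  | last =>
    have e : Fin.removeNth i.castSucc (Fin.snoc B γ : Fin (n + 2) → α) (Fin.last n)
        = (Fin.snoc B γ : Fin (n + 2) → α) (Fin.last (n + 1)) := by
      show (Fin.snoc B γ : Fin (n + 2) → α) (i.castSucc.succAbove (Fin.last n)) = _
      rw [hlast]
    rw [e]
    simp
  | cast j' =>
    have e : Fin.removeNth i.castSucc (Fin.snoc B γ : Fin (n + 2) → α) j'.castSucc
        = (Fin.snoc B γ : Fin (n + 2) → α) ((i.succAbove j').castSucc) := by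
      show (Fin.snoc B γ : Fin (n + 2) → α) (i.castSucc.succAbove j'.castSucc) = _
      rw [Fin.castSucc_succAbove_castSucc]
    rw [e]
    simp only [Fin.snoc_castSucc]
    rfl

lemma strictMono_snoc {n : ℕ} {B : Fin n → Ordinal} (hB : StrictMono B) {γ : Ordinal}
    (h : ∀ i, B i < γ) : StrictMono (Fin.snoc B γ : Fin (n + 1) → Ordinal) := by
  intro a b hab
  induction b using Fin.lastCases with
  | last =>
    obtain ⟨a', rfl⟩ := Fin.exists_castSucc_eq.mpr (Fin.ne_last_of_lt hab)
    simpa using h a'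
  | cast b' =>
    obtain ⟨a', rfl⟩ := Fin.exists_castSucc_eq.mpr
      (Fin.ne_last_of_lt (hab.trans_le (Fin.le_last _)))
    simp only [Fin.snoc_castSucc]
    exact hB (by simpa using hab)

theorem dAp_sub {n : ℕ} (f g : Fam S K n) (B : Fin (n + 1) → Ordinal) (s : S) (ξ : Ordinal) :
    dAp (fun A s ξ => f A s ξ - g A s ξ) B s ξ = dAp f B s ξ - dAp g B s ξ := by
  simp only [dAp, smul_sub, Finset.sum_sub_distrib]

theorem strictMono_removeNth {n : ℕ} {B : Fin (n + 1) → Ordinal} (hB : StrictMono B)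
    (i : Fin (n + 1)) : StrictMono (Fin.removeNth i B) :=
  hB.comp (Fin.strictMono_succAbove i)

/-- the two trivializations of the same coherent family differ by a coherent family -/
theorem isCoh_of_trivB {n : ℕ} {δ₀ : Ordinal} {φ : Fam S K (n + 2)} {ψ₁ ψ₂ : Fam S K (n + 1)}
    (h1 : IsTrivB δ₀ φ ψ₁) (h2 : IsTrivB δ₀ φ ψ₂) :
    IsCoh δ₀ (fun A s ξ => ψ₁ A s ξ - ψ₂ A s ξ) := by
  intro B hB hlt
  have := (h1 B hB hlt).sub (h2 B hB hlt)
  exact this.congr fun s ξ _ => by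
    rw [dAp_sub]
    abel

/-- trivialization below a successor ordinal, absolutely -/
theorem exists_trivB_succ {n : ℕ} {δ γ : Ordinal} {φ : Fam S K (n + 1)} (hφ : IsCoh δ φ)
    (hγ : γ < δ) : ∃ ψ : Fam S K n, IsTrivB (Order.succ γ) φ ψ := by
  classical
  set c : ℤ := (-1 : ℤ) ^ (n + 2) with hc
  refine ⟨fun A => if ∀ l, A l < γ then (fun s ξ => c • φ (Fin.snoc A γ) s ξ) else (fun _ _ => 0), ?_⟩
  intro B hB hlt
  rcases eq_or_lt_of_le (Order.lt_succ_iff.1 (hlt (Fin.last n))) with hlast | hlast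
  · -- B (last n) = γ
    have hterm : ∀ i : Fin (n + 1), i ≠ Fin.last n →
        ((-1 : ℤ) ^ (i : ℕ)) • (if ∀ l, (Fin.removeNth i B) l < γ
          then (fun s ξ => c • φ (Fin.snoc (Fin.removeNth i B) γ) s ξ) else (fun _ _ => 0))
        = fun (_ : S) (_ : Ordinal) => (0 : K) := by
      intro i hi
      obtain ⟨z, hz⟩ := Fin.exists_succAbove_eq (Ne.symm hi)
      have hcond : ¬ ∀ l, (Fin.removeNth i B) l < γ := by
        intro hall
        have := hall z
        rw [show Fin.removeNth i B z = B (i.succAbove z) from rfl, hz, hlast] at this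
        exact absurd this (lt_irrefl _)
      rw [if_neg hcond]
      funext s ξ
      simp
    have hval : ∀ s ξ, dAp (fun A => if ∀ l, A l < γ
          then (fun s ξ => c • φ (Fin.snoc A γ) s ξ) else (fun _ _ => 0)) B s ξ = φ B s ξ := by
      intro s ξ
      rw [dAp, Finset.sum_eq_single (Fin.last n)]
      · have hcond : ∀ l, (Fin.removeNth (Fin.last n) B) l < γ := by
          intro l
          rw [removeNth_last']
          rw [← hlast]
          exact hB (Fin.castSucc_lt_last l)
        rw [if_pos hcond, removeNth_last']
        have : Fin.snoc (Fin.init B) γ = B := by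
          rw [← hlast]
          exact Fin.snoc_init_self B
        rw [this, smul_smul, Fin.val_last, hc]
        have : ((-1 : ℤ) ^ n * (-1 : ℤ) ^ (n + 2)) = 1 := by
          rw [← pow_add, show n + (n + 2) = 2 * (n + 1) by ring, pow_mul, neg_one_sq, one_pow]
        rw [this, one_smul]
      · intro i _ hi
        have := congrFun (congrFun (hterm i hi) s) ξ
        simpa using this
      · intro hmem
        exact absurd (Finset.mem_univ _) hmem
    refine (Negl.zero (B 0)).congr fun s ξ _ => ?_
    rw [hval s ξ]
    exact (_root_.sub_self _).symm
  · -- all entries below γ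
    have hall : ∀ i, B i < γ := fun i => lt_of_le_of_lt (hB.monotone (Fin.le_last i)) hlast
    set C : Fin (n + 2) → Ordinal := Fin.snoc B γ with hC
    have hCmono : StrictMono C := strictMono_snoc hB hall
    have hClt : ∀ i, C i < δ := by
      intro i
      induction i using Fin.lastCases with
      | last => simpa [hC] using hγ
      | cast i' => simpa [hC] using (hall i').trans hγ
    have hC0 : C 0 = B 0 := by
      rw [hC, show (0 : Fin (n + 2)) = Fin.castSucc 0 from (Fin.castSucc_zero).symm,
        Fin.snoc_castSucc]
    have hkey : ∀ s ξ, dAp (fun A => if ∀ l, A l < γ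
          then (fun s ξ => c • φ (Fin.snoc A γ) s ξ) else (fun _ _ => 0)) B s ξ - φ B s ξ
        = c • dAp φ C s ξ := by
      intro s ξ
      have e1 : dAp (fun A => if ∀ l, A l < γ
            then (fun s ξ => c • φ (Fin.snoc A γ) s ξ) else (fun _ _ => 0)) B s ξ
          = c • ∑ j : Fin (n + 1), ((-1 : ℤ) ^ (j : ℕ)) • φ (Fin.removeNth j.castSucc C) s ξ := by
        rw [dAp, Finset.smul_sum]
        refine Finset.sum_congr rfl fun j _ => ?_
        have hcond : ∀ l, (Fin.removeNth j B) l < γ := fun l => hall _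
        rw [if_pos hcond, hC, removeNth_castSucc_snoc]
        rw [smul_comm]
      have e2 : dAp φ C s ξ
          = (∑ j : Fin (n + 1), ((-1 : ℤ) ^ (j : ℕ)) • φ (Fin.removeNth j.castSucc C) s ξ)
            + ((-1 : ℤ) ^ (n + 1)) • φ B s ξ := by
        rw [dAp, Fin.sum_univ_castSucc]
        simp only [Fin.coe_castSucc, Fin.val_last]
        rw [removeNth_last', hC, Fin.init_snoc]
      have e3 : (c * (-1 : ℤ) ^ (n + 1)) = -1 := by
        rw [hc, ← pow_add, show n + 2 + (n + 1) = 2 * (n + 1) + 1 by ring, pow_succ, pow_mul,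
          neg_one_sq, one_pow, one_mul]
      rw [e1, eq_sub_of_add_eq e2.symm, smul_sub, smul_smul, e3, neg_one_smul]
      abel
    have := (hφ C hCmono hClt).zsmul c
    rw [hC0] at this
    exact this.congr fun s ξ _ => (hkey s ξ).symm

/-- pairwise coherence for 1-families -/
lemma pair_coh {δ : Ordinal} {φ : Fam S K 1} (hφ : IsCoh δ φ) {a b : Ordinal} (hab : a < b)
    (hb : b < δ) :
    Negl a (fun s ξ => φ (fun _ => b) s ξ - φ (fun _ => a) s ξ) := by
  classical
  set P : Fin 2 → Ordinal := fun i => if i = 0 then a else b with hP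
  have hmono : StrictMono P := by
    intro x y hxy
    fin_cases x <;> fin_cases y <;>
      first
        | exact absurd hxy (by decide)
        | simpa [hP] using hab
  have hplt : ∀ i, P i < δ := by
    intro i
    fin_cases i <;> simp [hP, hab.trans hb, hb]
  have h0 : P 0 = a := by simp [hP]
  have hr0 : (Fin.removeNth (0 : Fin 2) P : Fin 1 → Ordinal) = fun _ => b := by
    funext j
    rw [Subsingleton.elim j 0]
    show P ((0 : Fin 2).succAbove 0) = b
    have : (0 : Fin 2).succAbove 0 = 1 := by decide
    rw [this, hP]
    simp
  have hr1 : (Fin.removeNth (1 : Fin 2) P : Fin 1 → Ordinal) = fun _ => a := by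
    funext j
    rw [Subsingleton.elim j 0]
    show P ((1 : Fin 2).succAbove 0) = a
    have : (1 : Fin 2).succAbove 0 = 0 := by decide
    rw [this, hP]
    simp
  have key := hφ P hmono hplt
  rw [h0] at key
  refine key.congr fun s ξ _ => ?_
  simp [dAp, Fin.sum_univ_succ, hr0, hr1, sub_eq_add_neg]

/-- the base case: 1-coherent families over ordinals of countable cofinality are trivial -/
theorem main_zero {δ : Ordinal} (hδ : δ.cof ≤ ℵ₀) (φ : Fam S K 1) (hφ : IsCoh (n := 0) δ φ) :
    ∃ ψ : Fam S K 0, IsTrivB δ φ ψ := by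
  classical
  rcases Ordinal.zero_or_succ_or_isSuccLimit δ with hz | ⟨γ, rfl⟩ | hlim
  · refine ⟨fun _ _ _ => 0, fun B hB hlt => ?_⟩
    exact absurd (hlt 0) (by rw [hz]; exact zero_le.not_gt)
  · exact exists_trivB_succ hφ (Order.lt_succ γ)
  · -- limit case of countable cofinality
    obtain ⟨f, hf⟩ := Ordinal.exists_fundamental_sequence δ
    have hω : δ.cof.ord = Ordinal.omega0 := by
      rw [le_antisymm hδ (Ordinal.aleph0_le_cof.2 hlim), Cardinal.ord_aleph0]
    set c : ℕ → Ordinal := fun j => f j (by rw [hω]; exact Ordinal.nat_lt_omega0 j) with hcdef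
    have hclt : ∀ j, c j < δ := fun j => hf.lt _
    have hcov : ∀ α < δ, ∃ j : ℕ, α ≤ c j := by
      intro α hα
      rw [← hf.blsub_eq] at hα
      obtain ⟨b, hb, hba⟩ := Ordinal.lt_blsub_iff.1 hα
      obtain ⟨j, rfl⟩ := Ordinal.lt_omega0.1 (by rw [← hω]; exact hb)
      exact ⟨j, hba⟩
    refine ⟨fun _ s ξ => if h : ∃ j, ξ < c j then φ (fun _ => c (Nat.find h)) s ξ else 0, ?_⟩
    intro B hB hlt
    set β₀ := B 0 with hβ₀
    obtain ⟨J, hJ⟩ := hcov β₀ (hlt 0)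
    have hUfin : ∀ j : ℕ,
        ({s : S | ∃ ξ, ξ < β₀ ∧ ξ < c j ∧ φ (fun _ => c j) s ξ ≠ φ (fun _ => β₀) s ξ}).Finite := by
      intro j
      rcases lt_trichotomy (c j) β₀ with h | h | h
      · exact (pair_coh hφ h (hlt 0)).subset fun s ⟨ξ, hξ1, hξ2, hne⟩ =>
          ⟨ξ, hξ2, sub_ne_zero_of_ne (Ne.symm hne)⟩
      · refine Set.Finite.subset (Set.finite_empty) fun s ⟨ξ, hξ1, hξ2, hne⟩ => ?_
        rw [h] at hne
        exact absurd rfl hne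
      · exact (pair_coh hφ h (hclt j)).subset fun s ⟨ξ, hξ1, hξ2, hne⟩ =>
          ⟨ξ, hξ1, sub_ne_zero_of_ne hne⟩
    refine Set.Finite.subset (Set.Finite.biUnion (Finset.range (J + 1)).finite_toSet
      (fun j _ => hUfin j)) ?_
    rintro s ⟨ξ, hξ, hne⟩
    have hex : ∃ j, ξ < c j := ⟨J, lt_of_lt_of_le hξ hJ⟩
    have hval : dAp (fun _ s ξ => if h : ∃ j, ξ < c j then φ (fun _ => c (Nat.find h)) s ξ else 0)
        B s ξ = φ (fun _ => c (Nat.find hex)) s ξ := by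
      simp [dAp, Fin.sum_univ_succ, dif_pos hex]
    have hBT : φ B s ξ = φ (fun _ => β₀) s ξ := by
      congr 1
      refine funext fun i => ?_
      have hi : i = 0 := Fin.eq_zero i
      rw [hi]
    simp only [ne_eq] at hne
    rw [hval, hBT] at hne
    exact Set.mem_biUnion (x := Nat.find hex)
      (Finset.mem_coe.2 (Finset.mem_range.2
        (Nat.lt_succ_of_le (Nat.find_min' hex (lt_of_lt_of_le hξ hJ)))))
      ⟨ξ, hξ, Nat.find_spec hex, sub_ne_zero.mp hne⟩

theorem dd_zero' {n : ℕ} (χ : Fam S K n) (B : Fin (n + 2) → Ordinal) (s : S) (ξ : Ordinal) :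
    dAp (fun A s ξ => dAp χ A s ξ) B s ξ = 0 :=
  dd_zero χ B s ξ

theorem dAp_split {n : ℕ} (g h : Fam S K n) (B : Fin (n + 1) → Ordinal) (s : S) (ξ : Ordinal) :
    dAp g B s ξ = dAp h B s ξ
      + ∑ i : Fin (n + 1), ((-1 : ℤ) ^ (i : ℕ)) •
          (g (Fin.removeNth i B) s ξ - h (Fin.removeNth i B) s ξ) := by
  simp only [dAp, smul_sub, Finset.sum_sub_distrib]
  abel

section Ladder

variable (δ : Ordinal.{u}) (f : ∀ b < δ.cof.ord, Ordinal.{u})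

/-- auxiliary enumeration -/
noncomputable def E : Ordinal → Ordinal := fun ν => if h : ν < δ.cof.ord then f ν h else 0

/-- the ladder: `D 0 = 1`, `D (ν+1) = max (D ν) (E ν) + 1`, continuous at limits -/
noncomputable def D : Ordinal → Ordinal := fun ν =>
  Ordinal.limitRecOn ν 1 (fun ρ d => Order.succ (max d (E δ f ρ)))
    (fun ρ _ ih => Ordinal.bsup.{u, u} ρ ih)

theorem D_zero : D δ f 0 = 1 := Ordinal.limitRecOn_zero _ _ _

theorem D_succ (ρ : Ordinal) :
    D δ f (Order.succ ρ) = Order.succ (max (D δ f ρ) (E δ f ρ)) :=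
  Ordinal.limitRecOn_succ _ _ _ _

theorem D_limit (ρ : Ordinal) (h : Order.IsSuccLimit ρ) :
    D δ f ρ = Ordinal.bsup.{u, u} ρ (fun ν' _ => D δ f ν') :=
  Ordinal.limitRecOn_limit _ _ _ _ h

attribute [irreducible] D E

theorem D_mono : ∀ b a, a < b → D δ f a < D δ f b := by
  intro b
  induction b using Ordinal.induction with
  | _ b IH =>
    intro a hab
    rcases Ordinal.zero_or_succ_or_isSuccLimit b with rfl | ⟨ρ, rfl⟩ | hb
    · exact absurd hab zero_le.not_gt
    · have ha : a ≤ ρ := Order.lt_succ_iff.1 hab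
      have h1 : D δ f a ≤ D δ f ρ := by
        rcases eq_or_lt_of_le ha with rfl | h
        · exact le_rfl
        · exact (IH ρ (Order.lt_succ ρ) a h).le
      calc D δ f a ≤ max (D δ f ρ) (E δ f ρ) := h1.trans (le_max_left _ _)
        _ < D δ f (Order.succ ρ) := by rw [D_succ]; exact Order.lt_succ _
    · rw [D_limit δ f b hb]
      have h1 : D δ f a < D δ f (Order.succ a) := by
        rw [D_succ]
        exact lt_of_le_of_lt (le_max_left _ _) (Order.lt_succ _)
      exact h1.trans_le (Ordinal.le_bsup (fun ν' _ => D δ f ν') _ (hb.succ_lt hab))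

theorem D_mono_le {a b : Ordinal} (h : a ≤ b) : D δ f a ≤ D δ f b := by
  rcases eq_or_lt_of_le h with rfl | h
  · exact le_rfl
  · exact (D_mono δ f b a h).le

variable {δ f}

theorem E_lt (hf : Ordinal.IsFundamentalSequence δ δ.cof.ord f) {ν : Ordinal}
    (hν : ν < δ.cof.ord) : E δ f ν < δ := by
  rw [E, dif_pos hν]
  exact hf.lt hν

theorem D_lt (hlim : Order.IsSuccLimit δ) (hf : Ordinal.IsFundamentalSequence δ δ.cof.ord f) :
    ∀ ν < δ.cof.ord, D δ f ν < δ := by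
  intro ν
  induction ν using Ordinal.induction with
  | _ ν IH =>
    intro hν
    rcases Ordinal.zero_or_succ_or_isSuccLimit ν with rfl | ⟨ρ, rfl⟩ | hb
    · rw [D_zero]
      exact Ordinal.one_lt_of_isSuccLimit hlim
    · rw [D_succ]
      have hρ : ρ < δ.cof.ord := (Order.lt_succ ρ).trans hν
      exact hlim.succ_lt (max_lt (IH ρ (Order.lt_succ ρ) hρ) (E_lt hf hρ))
    · rw [D_limit δ f ν hb]
      refine Ordinal.bsup_lt_ord (Cardinal.lt_ord.1 hν) ?_
      intro i hi
      exact IH i hi (hi.trans hν)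

theorem D_cof {k : ℕ} (hδk : δ.cof ≤ Cardinal.aleph (k + 1 : ℕ)) :
    ∀ ν < δ.cof.ord, (D δ f ν).cof ≤ Cardinal.aleph (k : ℕ) := by
  intro ν hν
  have h1le : (1 : Cardinal) ≤ Cardinal.aleph (k : ℕ) :=
    (Cardinal.one_lt_aleph0.le.trans (Cardinal.aleph0_le_aleph _))
  rcases Ordinal.zero_or_succ_or_isSuccLimit ν with rfl | ⟨ρ, rfl⟩ | hb
  · rw [D_zero, show (1 : Ordinal) = Order.succ 0 from (Ordinal.succ_zero).symm,
      Ordinal.cof_succ]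
    exact h1le
  · rw [D_succ, Ordinal.cof_succ]
    exact h1le
  · rw [D_limit δ f ν hb]
    refine le_trans (Ordinal.cof_bsup_le (o := ν) (f := fun ν' _ => D δ f ν') ?_) ?_
    · intro i hi
      rw [← D_limit δ f ν hb]
      exact D_mono δ f ν i hi
    · have hcard : ν.card < Cardinal.aleph (k + 1 : ℕ) := by
        refine Cardinal.lt_ord.1 (hν.trans_le ?_)
        exact Cardinal.ord_le_ord.2 hδk
      have hcast : ((k + 1 : ℕ) : Ordinal) = Order.succ (k : Ordinal) := by
        rw [Nat.cast_add, Nat.cast_one, Ordinal.add_one_eq_succ]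
      rw [hcast, Cardinal.aleph_succ, Order.lt_succ_iff] at hcard
      exact hcard

theorem D_cov (hlim : Order.IsSuccLimit δ) (hf : Ordinal.IsFundamentalSequence δ δ.cof.ord f) :
    ∀ α < δ, ∃ ν < δ.cof.ord, α < D δ f ν := by
  intro α hα
  have hcord : Order.IsSuccLimit δ.cof.ord :=
    Cardinal.isSuccLimit_ord (Ordinal.aleph0_le_cof.2 hlim)
  rw [← hf.blsub_eq] at hα
  obtain ⟨ρ, hρ, hle⟩ := Ordinal.lt_blsub_iff.1 hα
  refine ⟨Order.succ ρ, hcord.succ_lt hρ, ?_⟩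
  rw [D_succ]
  refine lt_of_le_of_lt ?_ (Order.lt_succ _)
  refine le_trans ?_ (le_max_right _ _)
  rw [E, dif_pos hρ]
  exact hle

theorem D_limit_cov {ν : Ordinal} (hb : Order.IsSuccLimit ν) :
    ∀ α < D δ f ν, ∃ ν' < ν, α < D δ f ν' := by
  intro α hα
  rw [D_limit δ f ν hb] at hα
  obtain ⟨i, hi, h⟩ := (Ordinal.lt_bsup _).1 hα
  exact ⟨i, hi, h⟩

end Ladder

section Step

variable (k : ℕ) (δ : Ordinal.{u}) (f : ∀ b < δ.cof.ord, Ordinal.{u}) (φ : Fam S K (k + 2))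

/-- goodness of a stage-`ν` partial trivialization relative to the earlier stages -/
def GoodP (ν : Ordinal) (rec : Ordinal → Fam S K (k + 1)) (ψ : Fam S K (k + 1)) : Prop :=
  IsTrivB (D δ f ν) φ ψ ∧
    ∀ ν' < ν, ∀ A : Fin (k + 1) → Ordinal, StrictMono A → (∀ i, A i < D δ f ν') →
      Negl (A 0) (fun s ξ => ψ A s ξ - rec ν' A s ξ)

open Classical in
/-- the recursively constructed partial trivializations -/
noncomputable def Psf : Ordinal → Fam S K (k + 1) :=
  Ordinal.lt_wf.fix
    (fun ν rec =>
      if h : ∃ ψ, GoodP k δ f φ ν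
          (fun ν' => if h' : ν' < ν then rec ν' h' else fun _ _ _ => 0) ψ
      then h.choose else fun _ _ _ => 0)

open Classical in
theorem Psf_eq (ν : Ordinal) :
    Psf k δ f φ ν
      = if h : ∃ ψ, GoodP k δ f φ ν
            (fun ν' => if h' : ν' < ν then Psf k δ f φ ν' else fun _ _ _ => 0) ψ
        then h.choose else fun _ _ _ => 0 :=
  WellFounded.fix_eq _ _ _

open Classical in
/-- glue the partial trivializations below `μ` by taking, at each index tuple, the value of the
first stage covering it -/
noncomputable def Glue (μ : Ordinal) : Fam S K (k + 1) := fun A s ξ =>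
  if h : ({ν'' | ν'' < μ ∧ ∀ i, A i < D δ f ν''} : Set Ordinal).Nonempty
  then Psf k δ f φ (Ordinal.lt_wf.min _ h) A s ξ else 0

variable {k δ f φ}

theorem goodP_congr {ν : Ordinal} {r₁ r₂ : Ordinal → Fam S K (k + 1)}
    (hr : ∀ ν' < ν, r₁ ν' = r₂ ν') {ψ : Fam S K (k + 1)} (h : GoodP k δ f φ ν r₁ ψ) :
    GoodP k δ f φ ν r₂ ψ := by
  obtain ⟨h1, h2⟩ := h
  refine ⟨h1, fun ν' hν' A hA hAlt => ?_⟩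
  rw [← hr ν' hν']
  exact h2 ν' hν' A hA hAlt

theorem psf_good {ν : Ordinal} (hex : ∃ ψ, GoodP k δ f φ ν (Psf k δ f φ) ψ) :
    GoodP k δ f φ ν (Psf k δ f φ) (Psf k δ f φ ν) := by
  classical
  have hguard : ∀ ν' < ν,
      (fun ν'' => if h' : ν'' < ν then Psf k δ f φ ν'' else fun _ _ _ => 0) ν' = Psf k δ f φ ν' := by
    intro ν' h'
    simp only [dif_pos h']
  have hex2 : ∃ ψ, GoodP k δ f φ ν
      (fun ν'' => if h' : ν'' < ν then Psf k δ f φ ν'' else fun _ _ _ => 0) ψ := by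
    obtain ⟨ψ, hψ⟩ := hex
    exact ⟨ψ, goodP_congr (fun ν' h' => (hguard ν' h').symm) hψ⟩
  rw [Psf_eq k δ f φ ν, dif_pos hex2]
  exact goodP_congr hguard hex2.choose_spec

theorem glue_spec (μ T : Ordinal)
    (hcov : ∀ α < T, ∃ ν' < μ, α < D δ f ν')
    (hgood : ∀ ν' < μ, GoodP k δ f φ ν' (Psf k δ f φ) (Psf k δ f φ ν')) :
    IsTrivB T φ (Glue k δ f φ μ) ∧
      ∀ ν' < μ, ∀ A : Fin (k + 1) → Ordinal, StrictMono A → (∀ i, A i < D δ f ν') →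
        Negl (A 0) (fun s ξ => Glue k δ f φ μ A s ξ - Psf k δ f φ ν' A s ξ) := by
  classical
  constructor
  · intro B hB hlt
    have hex : ∀ i : Fin (k + 2), ∃ ν' < μ, B i < D δ f ν' := fun i => hcov (B i) (hlt i)
    choose g hglt hgB using hex
    have hμpos : (⊥ : Ordinal) < μ := lt_of_le_of_lt bot_le (hglt 0)
    set ν0 : Ordinal := Finset.univ.sup g with hν0
    have hν0lt : ν0 < μ := Finset.sup_lt_iff hμpos |>.2 fun i _ => hglt i
    have hBν0 : ∀ i, B i < D δ f ν0 :=
      fun i => (hgB i).trans_le (D_mono_le δ f (Finset.le_sup (Finset.mem_univ i)))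
    have hAset : ∀ i : Fin (k + 2),
        ({ν'' | ν'' < μ ∧ ∀ l, (Fin.removeNth i B) l < D δ f ν''} : Set Ordinal).Nonempty :=
      fun i => ⟨ν0, hν0lt, fun l => hBν0 _⟩
    set m : Fin (k + 2) → Ordinal := fun i => Ordinal.lt_wf.min _ (hAset i) with hm
    have hmmem : ∀ i, m i < μ ∧ ∀ l, (Fin.removeNth i B) l < D δ f (m i) :=
      fun i => Ordinal.lt_wf.min_mem _ (hAset i)
    set ν1 : Ordinal := max ν0 (Finset.univ.sup m) with hν1
    have hν1lt : ν1 < μ :=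
      max_lt hν0lt (Finset.sup_lt_iff hμpos |>.2 fun i _ => (hmmem i).1)
    have hν1good := hgood ν1 hν1lt
    have hmle : ∀ i, m i ≤ ν1 :=
      fun i => le_trans (Finset.le_sup (Finset.mem_univ i)) (le_max_right _ _)
    have hglueval : ∀ i : Fin (k + 2), ∀ s ξ,
        Glue k δ f φ μ (Fin.removeNth i B) s ξ = Psf k δ f φ (m i) (Fin.removeNth i B) s ξ := by
      intro i s ξ
      rw [Glue, dif_pos (hAset i)]
    have hdiff : ∀ i : Fin (k + 2), Negl (B 0)
        (fun s ξ => Glue k δ f φ μ (Fin.removeNth i B) s ξ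
          - Psf k δ f φ ν1 (Fin.removeNth i B) s ξ) := by
      intro i
      rcases eq_or_lt_of_le (hmle i) with heq | hlt'
      · refine (Negl.zero (B 0)).congr fun s ξ _ => ?_
        rw [hglueval i s ξ, heq]
        exact (_root_.sub_self _).symm
      · have h2 := (hν1good.2 (m i) hlt' (Fin.removeNth i B)
          (strictMono_removeNth hB i) (hmmem i).2).neg
        have h4 : Negl ((Fin.removeNth i B) 0)
            (fun s ξ => Glue k δ f φ μ (Fin.removeNth i B) s ξ
              - Psf k δ f φ ν1 (Fin.removeNth i B) s ξ) := by
          refine h2.congr fun s ξ _ => ?_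
          rw [neg_sub, hglueval i s ξ]
        exact h4.mono (hB.monotone (Fin.zero_le _))
    have hmain := hν1good.1 B hB
      (fun i => (hBν0 i).trans_le (D_mono_le δ f (le_max_left _ _)))
    have hsum : Negl (B 0) (fun s ξ => ∑ i : Fin (k + 2), ((-1 : ℤ) ^ (i : ℕ)) •
        (Glue k δ f φ μ (Fin.removeNth i B) s ξ - Psf k δ f φ ν1 (Fin.removeNth i B) s ξ)) :=
      Negl.sum Finset.univ _ (fun i _ => (hdiff i).zsmul _)
    refine (hmain.add hsum).congr fun s ξ _ => ?_
    rw [dAp_split (Glue k δ f φ μ) (Psf k δ f φ ν1) B s ξ]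
    abel
  · intro ν' hν' A hA hAlt
    have hne : ({ν'' | ν'' < μ ∧ ∀ i, A i < D δ f ν''} : Set Ordinal).Nonempty := ⟨ν', hν', hAlt⟩
    have hmem := Ordinal.lt_wf.min_mem _ hne
    have hm0le : Ordinal.lt_wf.min _ hne ≤ ν' :=
      le_of_not_gt (Ordinal.lt_wf.not_lt_min {ν'' | ν'' < μ ∧ ∀ i, A i < D δ f ν''} ⟨hν', hAlt⟩)
    have hval : ∀ s ξ, Glue k δ f φ μ A s ξ = Psf k δ f φ (Ordinal.lt_wf.min _ hne) A s ξ := by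
      intro s ξ
      rw [Glue, dif_pos hne]
    rcases eq_or_lt_of_le hm0le with heq | hlt'
    · refine (Negl.zero (A 0)).congr fun s ξ _ => ?_
      rw [hval s ξ, heq]
      exact (_root_.sub_self _).symm
    · have h2 := ((hgood ν' hν').2 _ hlt' A hA hmem.2).neg
      refine h2.congr fun s ξ _ => ?_
      rw [neg_sub, hval s ξ]

end Step

theorem main_step {k : ℕ}
    (IH : ∀ δ' : Ordinal.{u}, δ'.cof ≤ Cardinal.aleph (k : ℕ) →
      ∀ θ : Fam S K (k + 1), IsCoh δ' θ → ∃ χ, IsTrivB δ' θ χ)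
    {δ : Ordinal.{u}} (hδ : δ.cof ≤ Cardinal.aleph ((k + 1 : ℕ) : Ordinal)) (φ : Fam S K (k + 2))
    (hφ : IsCoh δ φ) : ∃ Ψ : Fam S K (k + 1), IsTrivB δ φ Ψ := by
  classical
  rcases Ordinal.zero_or_succ_or_isSuccLimit δ with hz | ⟨γ, rfl⟩ | hlim
  · refine ⟨fun _ _ _ => 0, fun B hB hlt => ?_⟩
    exact absurd (hlt 0) (by rw [hz]; exact zero_le.not_gt)
  · exact exists_trivB_succ hφ (Order.lt_succ γ)
  · obtain ⟨f, hf⟩ := Ordinal.exists_fundamental_sequence δ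
    have hGoodAll : ∀ ν, ν < δ.cof.ord → GoodP k δ f φ ν (Psf k δ f φ) (Psf k δ f φ ν) := by
      intro ν
      induction ν using Ordinal.induction with
      | _ ν IHν =>
        intro hν
        refine psf_good ?_
        rcases Ordinal.zero_or_succ_or_isSuccLimit ν with rfl | ⟨ρ, rfl⟩ | hb
        · obtain ⟨ψ, hψ⟩ := exists_trivB_succ hφ hlim.pos
          refine ⟨ψ, ?_, ?_⟩
          · rw [D_zero, ← Ordinal.succ_zero]
            exact hψ
          · intro ν' h'
            exact absurd h' zero_le.not_gt
        · have hρlt : ρ < δ.cof.ord := (Order.lt_succ ρ).trans hν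
          have hGρ := IHν ρ (Order.lt_succ ρ) hρlt
          have hγδ : max (D δ f ρ) (E δ f ρ) < δ :=
            max_lt (D_lt hlim hf ρ hρlt) (E_lt hf hρlt)
          obtain ⟨ψ'', hψ''⟩ := exists_trivB_succ hφ hγδ
          have hψ''ρ : IsTrivB (D δ f ρ) φ ψ'' :=
            hψ''.mono ((le_max_left _ _).trans (Order.le_succ _))
          have hθ : IsCoh (D δ f ρ) (fun A s ξ => ψ'' A s ξ - Psf k δ f φ ρ A s ξ) :=
            isCoh_of_trivB hψ''ρ hGρ.1
          obtain ⟨χ, hχ⟩ := IH (D δ f ρ) (D_cof hδ ρ hρlt) _ hθ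
          refine ⟨fun A s ξ => ψ'' A s ξ - dAp χ A s ξ, ?_, ?_⟩
          · intro B hB hlt
            have h1 := hψ'' B hB (by rw [← D_succ]; exact hlt)
            refine h1.congr fun s ξ _ => ?_
            rw [dAp_sub ψ'' (fun A s ξ => dAp χ A s ξ) B s ξ, dd_zero' χ B s ξ, _root_.sub_zero]
          · intro ν' hν'succ A hA hAlt
            have hν'le : ν' ≤ ρ := Order.lt_succ_iff.1 hν'succ
            have hnegχ := (hχ A hA (fun i => (hAlt i).trans_le (D_mono_le δ f hν'le))).neg
            rcases eq_or_lt_of_le hν'le with rfl | hν'ρ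
            · refine hnegχ.congr fun s ξ _ => ?_
              simp only [neg_sub]
              abel
            · have hcomp := hGρ.2 ν' hν'ρ A hA hAlt
              refine (hnegχ.add hcomp).congr fun s ξ _ => ?_
              simp only [neg_sub]
              abel
        · have hpair := glue_spec ν (D δ f ν) (D_limit_cov hb)
            (fun ν' h' => IHν ν' h' (h'.trans hν))
          exact ⟨Glue k δ f φ ν, hpair.1, hpair.2⟩
    have hfinal := glue_spec δ.cof.ord δ (D_cov hlim hf) hGoodAll
    exact ⟨Glue k δ f φ δ.cof.ord, hfinal.1⟩

theorem main : ∀ k : ℕ, ∀ δ : Ordinal.{u}, δ.cof ≤ Cardinal.aleph ((k : ℕ) : Ordinal) →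
    ∀ φ : Fam S K (k + 1), IsCoh δ φ → ∃ ψ : Fam S K k, IsTrivB δ φ ψ := by
  intro k
  induction k with
  | zero =>
    intro δ h φ hφ
    refine main_zero ?_ φ hφ
    rwa [Nat.cast_zero, Cardinal.aleph_zero] at h
  | succ k IHk =>
    intro δ h φ hφ
    exact main_step IHk h φ hφ

end Goblot

open Cardinal

/-- **Goblot.** Let `n = m + 1 ≥ 1`, let `S` be a set, `K` an abelian group,
and `β` an ordinal of cofinality at most `ℵ_{n-1} = ℵ_m`.  Then every `n`-coherent family
`⟨φ_{α⃗} : S × α₀ → K⟩` indexed by strictly increasing `n`-tuples of ordinals below `β`,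
coherent modulo finitely many rows, is trivial. -/
theorem stmt_10 (m : ℕ) (S : Type*) (K : Type*) [AddCommGroup K]
    (β : Ordinal) (hβ : β.cof ≤ aleph m)
    (φ : (Fin (m + 1) → Ordinal) → S → Ordinal → K)
    (hcoh : ∀ B : Fin (m + 2) → Ordinal, StrictMono B → (∀ i, B i < β) →
      {s : S | ∃ ξ < B 0,
        ∑ i : Fin (m + 2), ((-1 : ℤ) ^ (i : ℕ)) • φ (Fin.removeNth i B) s ξ ≠ 0}.Finite) :
    ∃ ψ : (Fin m → Ordinal) → S → Ordinal → K,
      ∀ B : Fin (m + 1) → Ordinal, StrictMono B → (∀ i, B i < β) →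
        {s : S | ∃ ξ < B 0,
          (∑ i : Fin (m + 1), ((-1 : ℤ) ^ (i : ℕ)) • ψ (Fin.removeNth i B) s ξ)
            - φ B s ξ ≠ 0}.Finite := by
  classical
  have hc : Goblot.IsCoh β φ := by
    intro B hB hlt
    have := hcoh B hB hlt
    simpa [Goblot.Negl, Goblot.dAp] using this
  obtain ⟨ψ, hψ⟩ := Goblot.main m β hβ φ hc
  refine ⟨ψ, fun B hB hlt => ?_⟩
  have := hψ B hB hlt
  simpa [Goblot.Negl, Goblot.dAp] using this
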